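/- The family O of observable regular languages is not closed under union: there exist observable regular languages L₁, L₂ such that L₁ ∪ L₂ is not observable. -/

import Mathlib

open Computability

/-- A state `q` of a DFA is *observable* if some word leads from it to an accepting state. -/
def ObsState {α σ : Type} (M : DFA α σ) (q : σ) : Prop :=
  ∃ w : List α, M.evalFrom q w ∈ M.accept

/-- A state is *semi-observable* if it is observable and some single input symbol
leads from it to a non-observable state. -/
def SemiObsState {α σ : Type} (M : DFA α σ) (q : σ) : Prop :=
  ObsState M q ∧ ∃ a : α, ¬ ObsState M (M.step q a)

/-- All states of the DFA are accessible from the start state. -/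
def Accessible {α σ : Type} (M : DFA α σ) : Prop :=
  ∀ q : σ, ∃ w : List α, M.eval w = q

/-- `L` is accepted by some (completely specified, accessible) DFA all of whose
states are observable.  This is membership in the family `O` over the alphabet `α`. -/
def AcceptsObservably (α : Type) (L : Language α) : Prop :=
  ∃ (σ : Type) (_ : Fintype σ) (M : DFA α σ),
    Accessible M ∧ (∀ q : σ, ObsState M q) ∧ M.accepts = L

/-- Membership in the family `T_k`: `L` is accepted by some accessible DFA with at
most `k` semi-observable states. -/
def InT (α : Type) (k : ℕ) (L : Language α) : Prop :=
  ∃ (σ : Type) (_ : Fintype σ) (M : DFA α σ),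
    Accessible M ∧ M.accepts = L ∧ {q : σ | SemiObsState M q}.ncard ≤ k

/-- The alphabet (the whole type `α`) is minimal for `L`: every letter occurs in some word of `L`. -/
def MinimalAlphabet {α : Type} (L : Language α) : Prop :=
  ∀ a : α, ∃ w ∈ L, a ∈ w

/-- The minimal alphabet of `L`: the letters occurring in some word of `L`. -/
def minAlph {α : Type} (L : Language α) : Set α := {a : α | ∃ w ∈ L, a ∈ w}

/-- `L` viewed as a language over its minimal alphabet. -/
def restrictToMin {α : Type} (L : Language α) : Language (minAlph L) :=
  {w : List (minAlph L) | w.map Subtype.val ∈ L}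

/-- `L` belongs to the family `O`: it is observable with respect to its minimal alphabet. -/
def InO {α : Type} (L : Language α) : Prop :=
  AcceptsObservably (minAlph L) (restrictToMin L)


/-- The language of words all of whose letters equal `b`. -/
def constLang (b : Bool) : Language Bool := {w | ∀ x ∈ w, x = b}

lemma constLang_obs (b : Bool) : InO (constLang b) := by
  refine ⟨Unit, inferInstance, ⟨fun _ _ => (), (), Set.univ⟩, fun q => ⟨[], rfl⟩,
    fun q => ⟨[], trivial⟩, ?_⟩
  ext w
  simp only [DFA.mem_accepts, Set.mem_univ, true_iff]
  show w.map Subtype.val ∈ constLang b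
  intro x hx
  obtain ⟨a, ha, rfl⟩ := List.mem_map.1 hx
  obtain ⟨w', hw', haw'⟩ := a.2
  exact hw' _ haw'

/-- `O` is not closed under union (`+` on `Language` is union). -/
theorem O_not_closed_union :
    ∃ (α : Type) (_ : Fintype α) (L₁ L₂ : Language α),
      InO L₁ ∧ InO L₂ ∧ ¬ InO (L₁ + L₂) := by
  refine ⟨Bool, inferInstance, constLang false, constLang true,
    constLang_obs false, constLang_obs true, ?_⟩
  rintro ⟨σ, _, M, hacc, hobs, hL⟩
  have hmemF : (false : Bool) ∈ minAlph (constLang false + constLang true) := by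
    exact ⟨[false], Or.inl (by intro x hx; simpa using hx), by simp⟩
  have hmemT : (true : Bool) ∈ minAlph (constLang false + constLang true) := by
    exact ⟨[true], Or.inr (by intro x hx; simpa using hx), by simp⟩
  set u : List (minAlph (constLang false + constLang true)) :=
    [⟨false, hmemF⟩, ⟨true, hmemT⟩] with hu
  obtain ⟨w, hw⟩ := hobs (M.eval u)
  have hmem : (u ++ w) ∈ M.accepts := by
    rw [DFA.mem_accepts, DFA.eval, DFA.evalFrom_of_append]
    exact hw
  rw [hL] at hmem
  have h2 : ((u ++ w).map Subtype.val) ∈ (constLang false + constLang true : Language Bool) :=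
    hmem
  have htm : (true : Bool) ∈ (u ++ w).map Subtype.val :=
    List.mem_map_of_mem (f := Subtype.val)
      (show (⟨true, hmemT⟩ : minAlph (constLang false + constLang true)) ∈ u ++ w from
        List.mem_append_left _ (by rw [hu]; simp))
  have hfm : (false : Bool) ∈ (u ++ w).map Subtype.val :=
    List.mem_map_of_mem (f := Subtype.val)
      (show (⟨false, hmemF⟩ : minAlph (constLang false + constLang true)) ∈ u ++ w from
        List.mem_append_left _ (by rw [hu]; simp))
  rcases h2 with h | h
  · exact absurd (h true htm) (by simp)
  · exact absurd (h false hfm) (by simp)
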